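/- arXiv:2509.24820 — 6 statements merged into one kernel-verified Lean document; each statement's English description precedes it below -/
import Mathlib

section
/- Let π : ℝ → ℝ be the unnormalized posterior density π(θ) = ((θ²+1)/(θ²+2))^{T/2} · exp( -(1/2)( ((θ²+1)/(θ²+2)) ∑_{t=1}^T (θ - y_t)² + θ²/σ₀² ) ), where T ≥ 1, y_1,...,y_T ∈ ℝ, and σ₀ > 0. Then (θ/|θ|) · (d/dθ) log π(θ) → -∞ as |θ| → ∞. -/
open Filter Real

set_option maxHeartbeats 1600000 in
/-- Super-exponential tails for the synthetic-example posterior: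
`(θ/|θ|) · (log π)'(θ) → -∞` as `|θ| → ∞`. -/
theorem superexp_tails_synthetic (T : ℕ) (hT : 1 ≤ T) (y : Fin T → ℝ) (σ₀ : ℝ) (hσ₀ : 0 < σ₀)
    (p : ℝ → ℝ)
    (hπ : ∀ θ : ℝ, p θ =
      ((θ ^ 2 + 1) / (θ ^ 2 + 2)) ^ ((T : ℝ) / 2) *
        Real.exp (-(1 / 2) * (((θ ^ 2 + 1) / (θ ^ 2 + 2)) * ∑ t : Fin T, (θ - y t) ^ 2
          + θ ^ 2 / σ₀ ^ 2))) :
    Tendsto (fun θ : ℝ => (θ / |θ|) * deriv (fun t => Real.log (p t)) θ)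
      (Filter.cocompact ℝ) Filter.atBot := by
  obtain ⟨Y, hYdef⟩ : ∃ Y : ℝ, Y = ∑ t : Fin T, y t := ⟨_, rfl⟩
  obtain ⟨S, hSdef⟩ : ∃ S : ℝ → ℝ, S = fun θ => ∑ t : Fin T, (θ - y t) ^ 2 := ⟨_, rfl⟩
  obtain ⟨r, hrdef⟩ : ∃ r : ℝ → ℝ, r = fun θ => (θ ^ 2 + 1) / (θ ^ 2 + 2) := ⟨_, rfl⟩
  obtain ⟨f, hfdef⟩ : ∃ f : ℝ → ℝ, f = fun θ =>
      (T / 2 : ℝ) * ((2 * θ / (θ ^ 2 + 2) ^ 2) / r θ) +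
        (-(1 / 2)) * ((2 * θ / (θ ^ 2 + 2) ^ 2) * S θ + r θ * (2 * (T * θ - Y))
          + 2 * θ / σ₀ ^ 2) := ⟨_, rfl⟩
  have hden : ∀ θ : ℝ, (θ : ℝ) ^ 2 + 2 ≠ 0 := fun θ => by positivity
  have hrpos : ∀ θ : ℝ, 0 < r θ := fun θ => by
    simp only [hrdef]; positivity
  have hS0 : ∀ θ : ℝ, 0 ≤ S θ := fun θ => by
    simp only [hSdef]; exact Finset.sum_nonneg fun t _ => sq_nonneg _
  -- the log of the density
  have hlogp : ∀ θ : ℝ, Real.log (p θ) =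
      (T / 2 : ℝ) * Real.log (r θ) + (-(1 / 2)) * (r θ * S θ + θ ^ 2 / σ₀ ^ 2) := by
    intro θ
    simp only [hrdef, hSdef]
    rw [hπ θ, Real.log_mul (by positivity) (Real.exp_ne_zero _),
      Real.log_rpow (by positivity), Real.log_exp]
  -- the derivative
  have hderiv : ∀ θ : ℝ, deriv (fun t => Real.log (p t)) θ = f θ := by
    intro θ
    have h1 : HasDerivAt (fun θ : ℝ => θ ^ 2 + 1) (2 * θ) θ := by
      simpa using (hasDerivAt_pow 2 θ).add_const 1
    have h2 : HasDerivAt (fun θ : ℝ => θ ^ 2 + 2) (2 * θ) θ := by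
      simpa using (hasDerivAt_pow 2 θ).add_const 2
    have hrd : HasDerivAt r (2 * θ / (θ ^ 2 + 2) ^ 2) θ := by
      rw [hrdef]
      convert h1.div h2 (hden θ) using 1
      · rfl
      · rfl
      · rfl
      ring
    have hlogr : HasDerivAt (fun θ => Real.log (r θ)) ((2 * θ / (θ ^ 2 + 2) ^ 2) / r θ) θ :=
      hrd.log (hrpos θ).ne'
    have hSd : HasDerivAt S (2 * (T * θ - Y)) θ := by
      rw [hSdef]
      have h := HasDerivAt.sum
        (fun t (_ : t ∈ Finset.univ) => ((hasDerivAt_id θ).sub_const (y t)).pow 2)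
      convert h using 1
      · rfl
      · rfl
      · ext x
        simp [Finset.sum_apply]
      norm_num [Finset.sum_sub_distrib, Finset.sum_const, Finset.card_univ, Fintype.card_fin,
        nsmul_eq_mul, ← Finset.mul_sum, hYdef]
    have hq : HasDerivAt (fun θ : ℝ => θ ^ 2 / σ₀ ^ 2) (2 * θ / σ₀ ^ 2) θ := by
      simpa using (hasDerivAt_pow 2 θ).div_const (σ₀ ^ 2)
    have hL : HasDerivAt
        (fun θ => (T / 2 : ℝ) * Real.log (r θ) + (-(1 / 2)) * (r θ * S θ + θ ^ 2 / σ₀ ^ 2))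
        (f θ) θ := by
      have h := (hlogr.const_mul ((T : ℝ) / 2)).add (((hrd.mul hSd).add hq).const_mul (-(1 / 2)))
      convert h using 1
      · rfl
      · rfl
      · rfl
      simp only [hfdef]
    have heq : (fun t => Real.log (p t)) =
        fun θ => (T / 2 : ℝ) * Real.log (r θ) + (-(1 / 2)) * (r θ * S θ + θ ^ 2 / σ₀ ^ 2) :=
      funext hlogp
    rw [heq]
    exact hL.deriv
  have hfun : (fun θ : ℝ => (θ / |θ|) * deriv (fun t => Real.log (p t)) θ) =
      fun θ : ℝ => (θ / |θ|) * f θ := funext fun θ => by rw [hderiv θ]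
  rw [hfun, cocompact_eq_atBot_atTop, tendsto_sup]
  have hT1 : (1 : ℝ) ≤ (T : ℝ) := by exact_mod_cast hT
  constructor
  · -- θ → -∞
    apply tendsto_atBot_mono' atBot (f₁ := fun θ : ℝ => (T : ℝ) + |Y| / 2 + θ / 2)
    · filter_upwards [eventually_le_atBot (-(max 1 |Y|))] with θ hθ
      have hθ1 : θ ≤ -1 := le_trans hθ (by simp [neg_le_neg_iff, le_max_left])
      have hθY : θ ≤ -|Y| := le_trans hθ (by simp [le_max_right])
      have hθneg : θ < 0 := lt_of_le_of_lt hθ1 (by norm_num)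
      have hsign : θ / |θ| = -1 := by
        rw [abs_of_neg hθneg, div_neg, div_self hθneg.ne]
      rw [hsign]
      have hdpos : (0 : ℝ) < (θ ^ 2 + 2) * (θ ^ 2 + 1) := by positivity
      -- term A
      have hAeq : (T / 2 : ℝ) * ((2 * θ / (θ ^ 2 + 2) ^ 2) / r θ) =
          (T : ℝ) * θ / ((θ ^ 2 + 2) * (θ ^ 2 + 1)) := by
        simp only [hrdef]
        have h1 : (θ : ℝ) ^ 2 + 1 ≠ 0 := by positivity
        field_simp
      have hA : -((T / 2 : ℝ) * ((2 * θ / (θ ^ 2 + 2) ^ 2) / r θ)) ≤ (T : ℝ) := by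
        rw [hAeq, ← neg_div, div_le_iff₀ hdpos]
        have h1 : -θ ≤ (θ ^ 2 + 2) * (θ ^ 2 + 1) := by nlinarith [sq_nonneg θ]
        have h2 := mul_le_mul_of_nonneg_left h1 (le_trans zero_le_one hT1)
        nlinarith
      -- term B
      have hB : (2 * θ / (θ ^ 2 + 2) ^ 2) * S θ ≤ 0 := by
        apply mul_nonpos_of_nonpos_of_nonneg _ (hS0 θ)
        apply div_nonpos_of_nonpos_of_nonneg (by linarith) (by positivity)
      -- term C
      have hrhalf : (1 / 2 : ℝ) ≤ r θ := by
        simp only [hrdef]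
        rw [le_div_iff₀ (by positivity)]
        nlinarith [sq_nonneg θ]
      have hX : 2 * ((T : ℝ) * θ - Y) ≤ 0 := by
        have h1 : (T : ℝ) * θ ≤ θ := by nlinarith
        have h2 : -Y ≤ |Y| := neg_le_abs Y
        nlinarith
      have hC : r θ * (2 * ((T : ℝ) * θ - Y)) ≤ (1 / 2) * (2 * ((T : ℝ) * θ - Y)) :=
        mul_le_mul_of_nonpos_right hrhalf hX
      have hC' : (1 / 2 : ℝ) * (2 * ((T : ℝ) * θ - Y)) ≤ θ + |Y| := by
        have h1 : (T : ℝ) * θ ≤ θ := by nlinarith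
        have h2 : -Y ≤ |Y| := neg_le_abs Y
        nlinarith
      -- term D
      have hD : 2 * θ / σ₀ ^ 2 ≤ 0 :=
        div_nonpos_of_nonpos_of_nonneg (by linarith) (by positivity)
      simp only [hfdef, neg_one_mul]
      linarith
    · have h1 : Tendsto (fun θ : ℝ => θ / 2) atBot atBot := by
        apply Tendsto.atBot_div_const (by norm_num) tendsto_id
      exact tendsto_atBot_add_const_left atBot _ h1
  · -- θ → +∞
    apply tendsto_atBot_mono' atTop (f₁ := fun θ : ℝ => (T : ℝ) - θ / σ₀ ^ 2)
    · filter_upwards [eventually_ge_atTop (max 1 |Y|)] with θ hθ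
      have hθ1 : (1 : ℝ) ≤ θ := le_trans (le_max_left _ _) hθ
      have hθY : |Y| ≤ θ := le_trans (le_max_right _ _) hθ
      have hθpos : 0 < θ := lt_of_lt_of_le one_pos hθ1
      have hsign : θ / |θ| = 1 := by
        rw [abs_of_pos hθpos, div_self hθpos.ne']
      rw [hsign, one_mul]
      have hdpos : (0 : ℝ) < (θ ^ 2 + 2) * (θ ^ 2 + 1) := by positivity
      have hAeq : (T / 2 : ℝ) * ((2 * θ / (θ ^ 2 + 2) ^ 2) / r θ) =
          (T : ℝ) * θ / ((θ ^ 2 + 2) * (θ ^ 2 + 1)) := by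
        simp only [hrdef]
        have h1 : (θ : ℝ) ^ 2 + 1 ≠ 0 := by positivity
        field_simp
      have hA : (T / 2 : ℝ) * ((2 * θ / (θ ^ 2 + 2) ^ 2) / r θ) ≤ (T : ℝ) := by
        rw [hAeq, div_le_iff₀ hdpos]
        have h1 : θ ≤ (θ ^ 2 + 2) * (θ ^ 2 + 1) := by nlinarith [sq_nonneg θ]
        have h2 := mul_le_mul_of_nonneg_left h1 (le_trans zero_le_one hT1)
        nlinarith
      have hB : 0 ≤ (2 * θ / (θ ^ 2 + 2) ^ 2) * S θ := by
        apply mul_nonneg _ (hS0 θ)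
        positivity
      have hC : 0 ≤ r θ * (2 * ((T : ℝ) * θ - Y)) := by
        apply mul_nonneg (hrpos θ).le
        have h1 : θ ≤ (T : ℝ) * θ := by nlinarith
        have h2 : Y ≤ |Y| := le_abs_self Y
        nlinarith
      have hDeq : (-(1 / 2) : ℝ) * (2 * θ / σ₀ ^ 2) = -(θ / σ₀ ^ 2) := by ring
      simp only [hfdef]
      linarith
    · have h1 : Tendsto (fun θ : ℝ => -(θ / σ₀ ^ 2)) atTop atBot := by
        apply tendsto_neg_atTop_atBot.comp
        exact Tendsto.atTop_div_const (by positivity) tendsto_id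
      have h2 := tendsto_atBot_add_const_left atTop ((T : ℝ)) h1
      refine h2.congr fun θ => by ring
end

section
/- Let U ~ N(θ, 1/(θ²+1)) and define the single-observation importance weight R = φ(y; U, 1) / φ(y; θ, (θ²+2)/(θ²+1)), where φ(x; μ, σ²) is the N(μ, σ²) density. Then E[R²] = ((θ²+2)/√((θ²+1)(θ²+3))) · exp( (θ²+1)(θ - y)² / ((θ²+2)(θ²+3)) ), which is finite for every θ ∈ ℝ. -/
open MeasureTheory ProbabilityTheory Real

private lemma key_identity (θ y u : ℝ) :
    gaussianPDFReal θ (Real.toNNReal (1 / (θ ^ 2 + 1))) u *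
      (gaussianPDFReal u 1 y /
        gaussianPDFReal θ (Real.toNNReal ((θ ^ 2 + 2) / (θ ^ 2 + 1))) y) ^ 2 =
    (((θ ^ 2 + 2) / Real.sqrt ((θ ^ 2 + 1) * (θ ^ 2 + 3))) *
        Real.exp ((θ ^ 2 + 1) * (θ - y) ^ 2 / ((θ ^ 2 + 2) * (θ ^ 2 + 3)))) *
      gaussianPDFReal ((2 * y + (θ ^ 2 + 1) * θ) / (θ ^ 2 + 3))
        (Real.toNNReal (1 / (θ ^ 2 + 3))) u := by
  have hA : (0:ℝ) < θ ^ 2 + 1 := by positivity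
  have hB : (0:ℝ) < θ ^ 2 + 2 := by positivity
  have hC : (0:ℝ) < θ ^ 2 + 3 := by positivity
  have h1 : ((Real.toNNReal (1 / (θ ^ 2 + 1)) : NNReal) : ℝ) = 1 / (θ ^ 2 + 1) :=
    Real.coe_toNNReal _ (by positivity)
  have h2 : ((Real.toNNReal ((θ ^ 2 + 2) / (θ ^ 2 + 1)) : NNReal) : ℝ) = (θ ^ 2 + 2) / (θ ^ 2 + 1) :=
    Real.coe_toNNReal _ (by positivity)
  have h3 : ((Real.toNNReal (1 / (θ ^ 2 + 3)) : NNReal) : ℝ) = 1 / (θ ^ 2 + 3) :=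
    Real.coe_toNNReal _ (by positivity)
  simp only [gaussianPDFReal, h1, h2, h3, NNReal.coe_one]
  have hpi : (0:ℝ) < π := Real.pi_pos
  rw [← Real.log_injOn_pos.eq_iff (Set.mem_Ioi.2 (by positivity)) (Set.mem_Ioi.2 (by positivity))]
  repeat'
    first
      | rw [Real.log_mul (by positivity) (by positivity)]
      | rw [Real.log_div (by positivity) (by positivity)]
      | rw [Real.log_sqrt (by positivity)]
      | rw [Real.log_inv]
      | rw [Real.log_pow]
  simp only [Real.log_exp, Real.log_one]
  field_simp
  ring

/-- Second moment of the single-observation importance weight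
`R = φ(y; U, 1) / φ(y; θ, (θ²+2)/(θ²+1))` with `U ~ N(θ, 1/(θ²+1))`:
`E[R²] = ((θ²+2)/√((θ²+1)(θ²+3))) · exp((θ²+1)(θ-y)²/((θ²+2)(θ²+3)))`, finite for every `θ`. -/
theorem second_moment_importance_weight (θ y : ℝ) :
    Integrable
        (fun u : ℝ => (gaussianPDFReal u 1 y /
          gaussianPDFReal θ (Real.toNNReal ((θ ^ 2 + 2) / (θ ^ 2 + 1))) y) ^ 2)
        (gaussianReal θ (Real.toNNReal (1 / (θ ^ 2 + 1)))) ∧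
      ∫ u : ℝ, (gaussianPDFReal u 1 y /
            gaussianPDFReal θ (Real.toNNReal ((θ ^ 2 + 2) / (θ ^ 2 + 1))) y) ^ 2
          ∂(gaussianReal θ (Real.toNNReal (1 / (θ ^ 2 + 1)))) =
        ((θ ^ 2 + 2) / Real.sqrt ((θ ^ 2 + 1) * (θ ^ 2 + 3))) *
          Real.exp ((θ ^ 2 + 1) * (θ - y) ^ 2 / ((θ ^ 2 + 2) * (θ ^ 2 + 3))) := by
  set v : NNReal := Real.toNNReal (1 / (θ ^ 2 + 1)) with hv_def
  set w : NNReal := Real.toNNReal (1 / (θ ^ 2 + 3)) with hw_def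
  have hA : (0:ℝ) < θ ^ 2 + 1 := by positivity
  have hv : v ≠ 0 := by
    simp only [hv_def, ne_eq, Real.toNNReal_eq_zero, not_le]
    positivity
  have hw : w ≠ 0 := by
    simp only [hw_def, ne_eq, Real.toNNReal_eq_zero, not_le]
    positivity
  set g : ℝ → ℝ := fun u : ℝ => (gaussianPDFReal u 1 y /
      gaussianPDFReal θ (Real.toNNReal ((θ ^ 2 + 2) / (θ ^ 2 + 1))) y) ^ 2 with hg_def
  set c : ℝ := ((θ ^ 2 + 2) / Real.sqrt ((θ ^ 2 + 1) * (θ ^ 2 + 3))) *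
      Real.exp ((θ ^ 2 + 1) * (θ - y) ^ 2 / ((θ ^ 2 + 2) * (θ ^ 2 + 3))) with hc_def
  set m : ℝ := (2 * y + (θ ^ 2 + 1) * θ) / (θ ^ 2 + 3) with hm_def
  have hmeas : Measurable fun x : ℝ => (gaussianPDFReal θ v x).toNNReal :=
    (measurable_gaussianPDFReal θ v).real_toNNReal
  have hmeasure : gaussianReal θ v =
      volume.withDensity (fun x => ((gaussianPDFReal θ v x).toNNReal : ENNReal)) := by
    rw [gaussianReal_of_var_ne_zero θ hv]
    rfl
  have hsmul : ∀ x : ℝ, (gaussianPDFReal θ v x).toNNReal • g x = c * gaussianPDFReal m w x := by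
    intro x
    have := key_identity θ y x
    rw [NNReal.smul_def, Real.coe_toNNReal _ (gaussianPDFReal_nonneg θ v x)]
    simp only [hv_def, hw_def, hg_def, hc_def, hm_def]
    exact this
  have hint : Integrable (fun x : ℝ => (gaussianPDFReal θ v x).toNNReal • g x) volume := by
    simp only [hsmul]
    exact (integrable_gaussianPDFReal m w).const_mul c
  constructor
  · rw [hmeasure]
    exact (integrable_withDensity_iff_integrable_smul hmeas).mpr hint
  · rw [hmeasure, integral_withDensity_eq_integral_smul hmeas]
    change ∫ x, (gaussianPDFReal θ v x).toNNReal • g x = c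
    simp only [hsmul]
    rw [integral_const_mul, integral_gaussianPDFReal_eq_one m hw, mul_one]
end

section
/- As |θ| → ∞, the quantity ((θ²+2)^T / ((θ²+1)^{T/2}(θ²+3)^{T/2})) · exp( ((θ²+1)/((θ²+2)(θ²+3))) ∑_{t=1}^T (θ - y_t)² ) converges to exp(T). Consequently sup_{θ∈ℝ} E[W₁(θ)²] < ∞ where W₁(θ) = ∏_{t=1}^T φ(y_t; U_{t}, 1)/φ(y_t; θ, (θ²+2)/(θ²+1)) with U_t i.i.d. N(θ, 1/(θ²+1)). -/
open MeasureTheory ProbabilityTheory Filter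

open scoped NNReal ENNReal Real

namespace SecondMomentAux

open Real

lemma sq_cocompact : Tendsto (fun θ : ℝ => θ ^ 2) (cocompact ℝ) atTop := by
  have h := (tendsto_pow_atTop (two_ne_zero)).comp (tendsto_norm_cocompact_atTop (E := ℝ))
  simpa [Function.comp_def, sq_abs] using h

lemma inv_sq_add (c : ℝ) : Tendsto (fun θ : ℝ => 1 / (θ ^ 2 + c)) (cocompact ℝ) (nhds 0) := by
  have h : Tendsto (fun θ : ℝ => θ ^ 2 + c) (cocompact ℝ) atTop :=
    sq_cocompact.atTop_add tendsto_const_nhds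
  simpa only [one_div, Pi.inv_def] using h.inv_tendsto_atTop

lemma lin_div (a b c : ℝ) (hc : 0 < c) :
    Tendsto (fun θ : ℝ => (a * θ + b) / (θ ^ 2 + c)) (cocompact ℝ) (nhds 0) := by
  have hg : Tendsto (fun θ : ℝ => (|a| + |b|) / ‖θ‖) (cocompact ℝ) (nhds 0) :=
    tendsto_const_nhds.div_atTop tendsto_norm_cocompact_atTop
  refine squeeze_zero_norm' ?_ hg
  filter_upwards [tendsto_norm_cocompact_atTop.eventually_ge_atTop 1] with θ hθ
  have hθ0 : (0:ℝ) < |θ| := lt_of_lt_of_le one_pos hθ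
  have hden : (0:ℝ) < θ ^ 2 + c := by positivity
  have habs : |a * θ + b| ≤ |a| * |θ| + |b| := (abs_add_le _ _).trans (by rw [abs_mul])
  have hsq : |θ| ^ 2 = θ ^ 2 := sq_abs θ
  rw [Real.norm_eq_abs, abs_div, abs_of_pos hden, Real.norm_eq_abs,
    div_le_div_iff₀ hden hθ0]
  rw [Real.norm_eq_abs] at hθ
  nlinarith [abs_nonneg a, abs_nonneg b, abs_nonneg θ,
    mul_le_mul_of_nonneg_right habs (abs_nonneg θ),
    mul_nonneg (abs_nonneg θ) (sub_nonneg.2 hθ),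
    mul_nonneg (abs_nonneg a) (mul_nonneg (abs_nonneg θ) (sub_nonneg.2 hθ)),
    mul_nonneg (abs_nonneg b) (mul_nonneg (abs_nonneg θ) (sub_nonneg.2 hθ))]

lemma term_lim (c : ℝ) :
    Tendsto (fun θ : ℝ => ((θ ^ 2 + 1) / ((θ ^ 2 + 2) * (θ ^ 2 + 3))) * (θ - c) ^ 2)
      (cocompact ℝ) (nhds 1) := by
  have h1 : Tendsto (fun θ : ℝ => (θ ^ 2 + 1) / (θ ^ 2 + 2)) (cocompact ℝ) (nhds 1) := by
    have heq : (fun θ : ℝ => (θ ^ 2 + 1) / (θ ^ 2 + 2)) =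
        fun θ : ℝ => 1 - 1 / (θ ^ 2 + 2) := by
      funext θ
      have h2 : (θ:ℝ) ^ 2 + 2 ≠ 0 := by positivity
      rw [one_sub_div h2, div_eq_div_iff h2 h2]; ring
    rw [heq]
    simpa using tendsto_const_nhds.sub (inv_sq_add 2)
  have h2 : Tendsto (fun θ : ℝ => (θ - c) ^ 2 / (θ ^ 2 + 3)) (cocompact ℝ) (nhds 1) := by
    have heq : (fun θ : ℝ => (θ - c) ^ 2 / (θ ^ 2 + 3)) =
        fun θ : ℝ => 1 + ((-2 * c) * θ + (c ^ 2 - 3)) / (θ ^ 2 + 3) := by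
      funext θ
      have h3 : (θ:ℝ) ^ 2 + 3 ≠ 0 := by positivity
      rw [one_add_div h3, div_eq_div_iff h3 h3]; ring
    rw [heq]
    simpa using tendsto_const_nhds.add (lin_div (-2 * c) (c ^ 2 - 3) 3 (by norm_num))
  have heq : (fun θ : ℝ => ((θ ^ 2 + 1) / ((θ ^ 2 + 2) * (θ ^ 2 + 3))) * (θ - c) ^ 2) =
      fun θ : ℝ => ((θ ^ 2 + 1) / (θ ^ 2 + 2)) * ((θ - c) ^ 2 / (θ ^ 2 + 3)) := by
    funext θ; rw [div_mul_div_comm, div_mul_eq_mul_div]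
  rw [heq]
  simpa using h1.mul h2

lemma prefactor_lim (T : ℕ) :
    Tendsto (fun θ : ℝ => (θ ^ 2 + 2) ^ T / ((θ ^ 2 + 1) ^ ((T : ℝ) / 2) *
      (θ ^ 2 + 3) ^ ((T : ℝ) / 2))) (cocompact ℝ) (nhds 1) := by
  have heq : (fun θ : ℝ => (θ ^ 2 + 2) ^ T / ((θ ^ 2 + 1) ^ ((T : ℝ) / 2) *
      (θ ^ 2 + 3) ^ ((T : ℝ) / 2))) =
      fun θ : ℝ => ((θ ^ 2 + 2) ^ 2 / ((θ ^ 2 + 1) * (θ ^ 2 + 3))) ^ ((T : ℝ) / 2) := by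
    funext θ
    have h1 : (0:ℝ) < θ ^ 2 + 1 := by positivity
    have h2 : (0:ℝ) < θ ^ 2 + 2 := by positivity
    have h3 : (0:ℝ) < θ ^ 2 + 3 := by positivity
    rw [Real.div_rpow (by positivity) (by positivity), Real.mul_rpow h1.le h3.le,
      ← Real.rpow_natCast (θ ^ 2 + 2) 2, ← Real.rpow_mul h2.le]
    have h4 : ((2:ℕ):ℝ) * ((T:ℝ) / 2) = ((T:ℕ):ℝ) := by push_cast; ring
    rw [h4, Real.rpow_natCast]
  rw [heq]
  have hr : Tendsto (fun θ : ℝ => (θ ^ 2 + 2) ^ 2 / ((θ ^ 2 + 1) * (θ ^ 2 + 3)))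
      (cocompact ℝ) (nhds 1) := by
    have heq2 : (fun θ : ℝ => (θ ^ 2 + 2) ^ 2 / ((θ ^ 2 + 1) * (θ ^ 2 + 3))) =
        fun θ : ℝ => 1 + (1 / (θ ^ 2 + 1)) * (1 / (θ ^ 2 + 3)) := by
      funext θ
      have h1 : (0:ℝ) < θ ^ 2 + 1 := by positivity
      have h3 : (0:ℝ) < θ ^ 2 + 3 := by positivity
      field_simp
      ring
    rw [heq2]
    have := (tendsto_const_nhds (x := (1:ℝ))).add ((inv_sq_add 1).mul (inv_sq_add 3))
    simpa using this
  have := hr.rpow_const (p := (T:ℝ)/2) (Or.inl one_ne_zero)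
  simpa using this

lemma integral_pi_prod {n : ℕ} (μ : Measure ℝ) [SigmaFinite μ] (f : Fin n → ℝ → ℝ) :
    ∫ x : Fin n → ℝ, ∏ i, f i (x i) ∂(Measure.pi fun _ => μ) = ∏ i, ∫ x, f i x ∂μ := by
  induction n with
  | zero =>
      simp [Measure.pi_of_empty, Measure.real, Measure.pi_univ]
  | succ n n_ih =>
      calc
        _ = ∫ x : ℝ × (Fin n → ℝ), f 0 x.1 * ∏ i : Fin n, f (Fin.succ i) (x.2 i)
              ∂(μ.prod (Measure.pi fun _ => μ)) := by
          rw [← ((measurePreserving_piFinSuccAbove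
            (fun _ : Fin (n + 1) => μ) 0).symm).integral_comp']
          simp_rw [MeasurableEquiv.piFinSuccAbove_symm_apply, Fin.insertNthEquiv,
            Fin.prod_univ_succ, Fin.insertNth_zero, Equiv.coe_fn_mk]
          simp [Fin.zero_succAbove, Fin.cons_succ, Fin.cons_zero]
        _ = (∫ x, f 0 x ∂μ) * ∏ i : Fin n, ∫ x, f (Fin.succ i) x ∂μ := by
          rw [← n_ih, ← integral_prod_mul]
        _ = ∏ i, ∫ x, f i x ∂μ := by rw [Fin.prod_univ_succ]

lemma gauss_shift (A m : ℝ) : ∫ u : ℝ, rexp (-(A * (u - m) ^ 2)) = Real.sqrt (π / A) := by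
  have h : (fun u : ℝ => rexp (-(A * (u - m) ^ 2))) = fun u => rexp (-A * (u - m) ^ 2) := by
    funext u; ring_nf
  rw [h, integral_sub_right_eq_self (μ := volume) (fun a => rexp (-A * a ^ 2)) m,
    integral_gaussian]

lemma integral_gaussianReal_eq (θ : ℝ) (s : ℝ≥0) (hs : s ≠ 0) (g : ℝ → ℝ) :
    ∫ u, g u ∂(gaussianReal θ s) = ∫ u, gaussianPDFReal θ s u * g u := by
  rw [gaussianReal_of_var_ne_zero θ hs]
  have h : gaussianPDF θ s = fun u => ((Real.toNNReal (gaussianPDFReal θ s u) : ℝ≥0) : ℝ≥0∞) :=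
    rfl
  rw [h, integral_withDensity_eq_integral_smul
    ((measurable_gaussianPDFReal θ s).real_toNNReal) g]
  congr 1
  funext u
  simp [NNReal.smul_def, Real.coe_toNNReal _ (gaussianPDFReal_nonneg θ s u)]

lemma ratio_form (a b d e1 e2 e3 : ℝ) :
    (a⁻¹ * rexp e1) * ((b⁻¹ * rexp e2) / (d⁻¹ * rexp e3)) ^ 2
      = (a⁻¹ * (b ^ 2)⁻¹ * d ^ 2) * rexp (e1 + 2 * e2 - 2 * e3) := by
  have h : ∀ x : ℝ, rexp x ^ 2 = rexp (2 * x) := fun x => by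
    rw [← Real.exp_nat_mul]; norm_num
  rw [div_pow, mul_pow, mul_pow, h, h, inv_pow, inv_pow]
  rw [show e1 + 2 * e2 - 2 * e3 = e1 + (2 * e2 - 2 * e3) by ring, Real.exp_add, Real.exp_sub]
  field_simp [Real.exp_ne_zero]

lemma one_dim (θ c : ℝ) :
    ∫ u : ℝ, (gaussianPDFReal u 1 c /
        gaussianPDFReal θ (Real.toNNReal ((θ ^ 2 + 2) / (θ ^ 2 + 1))) c) ^ 2
        ∂(gaussianReal θ (Real.toNNReal (1 / (θ ^ 2 + 1))))
    = ((θ ^ 2 + 2) / (Real.sqrt (θ ^ 2 + 1) * Real.sqrt (θ ^ 2 + 3))) *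
        rexp (((θ ^ 2 + 1) / ((θ ^ 2 + 2) * (θ ^ 2 + 3))) * (θ - c) ^ 2) := by
  have h1 : (0:ℝ) < θ ^ 2 + 1 := by positivity
  have h2 : (0:ℝ) < θ ^ 2 + 2 := by positivity
  have h3 : (0:ℝ) < θ ^ 2 + 3 := by positivity
  have hσ : (0:ℝ) < 1 / (θ ^ 2 + 1) := by positivity
  have hv : (0:ℝ) < (θ ^ 2 + 2) / (θ ^ 2 + 1) := by positivity
  have hs : Real.toNNReal (1 / (θ ^ 2 + 1)) ≠ 0 := by
    simp only [ne_eq, Real.toNNReal_eq_zero, not_le]; exact hσ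
  rw [integral_gaussianReal_eq θ _ hs]
  have hpt : (fun u : ℝ => gaussianPDFReal θ (Real.toNNReal (1 / (θ ^ 2 + 1))) u *
      (gaussianPDFReal u 1 c /
        gaussianPDFReal θ (Real.toNNReal ((θ ^ 2 + 2) / (θ ^ 2 + 1))) c) ^ 2)
      = fun u => (((Real.sqrt (2 * π * (1 / (θ ^ 2 + 1))))⁻¹ * ((Real.sqrt (2 * π)) ^ 2)⁻¹ *
          (Real.sqrt (2 * π * ((θ ^ 2 + 2) / (θ ^ 2 + 1)))) ^ 2) *
          rexp (((θ ^ 2 + 1) / ((θ ^ 2 + 2) * (θ ^ 2 + 3))) * (θ - c) ^ 2)) *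
          rexp (-(((θ ^ 2 + 3) / 2) *
            (u - (2 * c + θ * (θ ^ 2 + 1)) / (θ ^ 2 + 3)) ^ 2)) := by
    funext u
    simp only [gaussianPDFReal, Real.coe_toNNReal _ hσ.le, Real.coe_toNNReal _ hv.le,
      NNReal.coe_one, mul_one]
    rw [ratio_form]
    rw [show -(u - θ) ^ 2 / (2 * (1 / (θ ^ 2 + 1))) + 2 * (-(c - u) ^ 2 / 2) -
        2 * (-(c - θ) ^ 2 / (2 * ((θ ^ 2 + 2) / (θ ^ 2 + 1))))
        = ((θ ^ 2 + 1) / ((θ ^ 2 + 2) * (θ ^ 2 + 3))) * (θ - c) ^ 2 +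
          -(((θ ^ 2 + 3) / 2) * (u - (2 * c + θ * (θ ^ 2 + 1)) / (θ ^ 2 + 3)) ^ 2) by
      field_simp
      ring, Real.exp_add]
    ring
  rw [hpt, integral_const_mul, gauss_shift]
  have hconst : (Real.sqrt (2 * π * (1 / (θ ^ 2 + 1))))⁻¹ * ((Real.sqrt (2 * π)) ^ 2)⁻¹ *
      (Real.sqrt (2 * π * ((θ ^ 2 + 2) / (θ ^ 2 + 1)))) ^ 2 * Real.sqrt (π / ((θ ^ 2 + 3) / 2))
      = (θ ^ 2 + 2) / (Real.sqrt (θ ^ 2 + 1) * Real.sqrt (θ ^ 2 + 3)) := by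
    have hπ : (0:ℝ) < π := Real.pi_pos
    refine (sq_eq_sq₀ (by positivity) (by positivity)).1 ?_
    rw [mul_pow, mul_pow, div_pow, mul_pow, inv_pow, inv_pow,
      Real.sq_sqrt (by positivity : (0:ℝ) ≤ 2 * π * (1 / (θ ^ 2 + 1))),
      Real.sq_sqrt (by positivity : (0:ℝ) ≤ 2 * π),
      Real.sq_sqrt (by positivity : (0:ℝ) ≤ 2 * π * ((θ ^ 2 + 2) / (θ ^ 2 + 1))),
      Real.sq_sqrt (by positivity : (0:ℝ) ≤ π / ((θ ^ 2 + 3) / 2)),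
      mul_pow (Real.sqrt (θ ^ 2 + 1)) (Real.sqrt (θ ^ 2 + 3)),
      Real.sq_sqrt h1.le, Real.sq_sqrt h3.le]
    field_simp
  calc _ = ((Real.sqrt (2 * π * (1 / (θ ^ 2 + 1))))⁻¹ * ((Real.sqrt (2 * π)) ^ 2)⁻¹ *
        (Real.sqrt (2 * π * ((θ ^ 2 + 2) / (θ ^ 2 + 1)))) ^ 2 *
        Real.sqrt (π / ((θ ^ 2 + 3) / 2))) *
        rexp (((θ ^ 2 + 1) / ((θ ^ 2 + 2) * (θ ^ 2 + 3))) * (θ - c) ^ 2) := by ring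
    _ = _ := by rw [hconst]

lemma sqrt_pow_eq_rpow (b : ℝ) (hb : 0 < b) (T : ℕ) :
    Real.sqrt b ^ T = b ^ ((T : ℝ) / 2) := by
  rw [Real.sqrt_eq_rpow, ← Real.rpow_natCast (b ^ ((1:ℝ)/2)) T, ← Real.rpow_mul hb.le]
  congr 1
  ring

lemma integral_eq (T : ℕ) (θ : ℝ) (y : Fin T → ℝ) :
    ∫ u : Fin T → ℝ,
        (∏ t : Fin T, gaussianPDFReal (u t) 1 (y t) /
          gaussianPDFReal θ (Real.toNNReal ((θ ^ 2 + 2) / (θ ^ 2 + 1))) (y t)) ^ 2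
      ∂(Measure.pi fun _ : Fin T => gaussianReal θ (Real.toNNReal (1 / (θ ^ 2 + 1))))
    = ((θ ^ 2 + 2) ^ T / ((θ ^ 2 + 1) ^ ((T : ℝ) / 2) * (θ ^ 2 + 3) ^ ((T : ℝ) / 2))) *
        Real.exp (((θ ^ 2 + 1) / ((θ ^ 2 + 2) * (θ ^ 2 + 3))) * ∑ t : Fin T, (θ - y t) ^ 2) := by
  have h1 : (0:ℝ) < θ ^ 2 + 1 := by positivity
  have h3 : (0:ℝ) < θ ^ 2 + 3 := by positivity
  simp_rw [← Finset.prod_pow]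
  rw [integral_pi_prod (gaussianReal θ (Real.toNNReal (1 / (θ ^ 2 + 1))))
    (fun t u => (gaussianPDFReal u 1 (y t) /
      gaussianPDFReal θ (Real.toNNReal ((θ ^ 2 + 2) / (θ ^ 2 + 1))) (y t)) ^ 2)]
  simp_rw [one_dim θ]
  rw [Finset.prod_mul_distrib, Finset.prod_const, ← Real.exp_sum, ← Finset.mul_sum]
  congr 1
  rw [Finset.card_univ, Fintype.card_fin, div_pow, mul_pow,
    sqrt_pow_eq_rpow _ h1, sqrt_pow_eq_rpow _ h3]

end SecondMomentAux

/-- The explicit second-moment expression converges to `exp T` as `|θ| → ∞`, and consequently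
`sup_θ E[W₁(θ)²] < ∞` for the synthetic-example importance-sampling weight. -/
theorem second_moment_uniform_bound (T : ℕ) (hT : 1 ≤ T) (y : Fin T → ℝ) :
    Tendsto
        (fun θ : ℝ => ((θ ^ 2 + 2) ^ T / ((θ ^ 2 + 1) ^ ((T : ℝ) / 2) *
            (θ ^ 2 + 3) ^ ((T : ℝ) / 2))) *
          Real.exp (((θ ^ 2 + 1) / ((θ ^ 2 + 2) * (θ ^ 2 + 3))) * ∑ t : Fin T, (θ - y t) ^ 2))
        (Filter.cocompact ℝ) (nhds (Real.exp T)) ∧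
      ∃ M : ℝ, ∀ θ : ℝ,
        ∫ u : Fin T → ℝ,
            (∏ t : Fin T, gaussianPDFReal (u t) 1 (y t) /
              gaussianPDFReal θ (Real.toNNReal ((θ ^ 2 + 2) / (θ ^ 2 + 1))) (y t)) ^ 2
          ∂(Measure.pi fun _ : Fin T => gaussianReal θ (Real.toNNReal (1 / (θ ^ 2 + 1)))) ≤ M := by
  set f : ℝ → ℝ := fun θ : ℝ => ((θ ^ 2 + 2) ^ T / ((θ ^ 2 + 1) ^ ((T : ℝ) / 2) *
      (θ ^ 2 + 3) ^ ((T : ℝ) / 2))) *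
    Real.exp (((θ ^ 2 + 1) / ((θ ^ 2 + 2) * (θ ^ 2 + 3))) * ∑ t : Fin T, (θ - y t) ^ 2) with hf
  -- part 1 : the limit
  have hexp_arg : Tendsto (fun θ : ℝ =>
      ((θ ^ 2 + 1) / ((θ ^ 2 + 2) * (θ ^ 2 + 3))) * ∑ t : Fin T, (θ - y t) ^ 2)
      (cocompact ℝ) (nhds (T : ℝ)) := by
    have heq : (fun θ : ℝ =>
        ((θ ^ 2 + 1) / ((θ ^ 2 + 2) * (θ ^ 2 + 3))) * ∑ t : Fin T, (θ - y t) ^ 2) =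
        fun θ : ℝ => ∑ t : Fin T,
          ((θ ^ 2 + 1) / ((θ ^ 2 + 2) * (θ ^ 2 + 3))) * (θ - y t) ^ 2 := by
      funext θ; rw [Finset.mul_sum]
    rw [heq]
    have h := tendsto_finset_sum (Finset.univ : Finset (Fin T))
      (fun t _ => SecondMomentAux.term_lim (y t))
    simpa using h
  have h1 : Tendsto f (cocompact ℝ) (nhds (Real.exp T)) := by
    have := (SecondMomentAux.prefactor_lim T).mul
      ((Real.continuous_exp.tendsto _).comp hexp_arg)
    simpa [hf] using this
  refine ⟨h1, ?_⟩
  -- part 2 : the uniform bound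
  have hcont : Continuous f := by
    have hpoly1 : Continuous fun θ : ℝ => θ ^ 2 + 1 := by continuity
    have hpoly2 : Continuous fun θ : ℝ => θ ^ 2 + 2 := by continuity
    have hpoly3 : Continuous fun θ : ℝ => θ ^ 2 + 3 := by continuity
    have hden : Continuous fun θ : ℝ => (θ ^ 2 + 1) ^ ((T : ℝ) / 2) *
        (θ ^ 2 + 3) ^ ((T : ℝ) / 2) :=
      (hpoly1.rpow_const fun θ => Or.inl (by positivity)).mul
        (hpoly3.rpow_const fun θ => Or.inl (by positivity))
    have hdiv : Continuous fun θ : ℝ => (θ ^ 2 + 2) ^ T / ((θ ^ 2 + 1) ^ ((T : ℝ) / 2) *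
        (θ ^ 2 + 3) ^ ((T : ℝ) / 2)) := by
      refine (hpoly2.pow T).div hden fun θ => ?_
      have ha : (0:ℝ) < (θ ^ 2 + 1) ^ ((T : ℝ) / 2) :=
        Real.rpow_pos_of_pos (by positivity) _
      have hb : (0:ℝ) < (θ ^ 2 + 3) ^ ((T : ℝ) / 2) :=
        Real.rpow_pos_of_pos (by positivity) _
      positivity
    have hk : Continuous fun θ : ℝ => (θ ^ 2 + 1) / ((θ ^ 2 + 2) * (θ ^ 2 + 3)) :=
      hpoly1.div (hpoly2.mul hpoly3) fun θ => by positivity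
    have hsum : Continuous fun θ : ℝ => ∑ t : Fin T, (θ - y t) ^ 2 := by
      refine continuous_finset_sum _ fun t _ => ?_
      continuity
    exact hdiv.mul (Real.continuous_exp.comp (hk.mul hsum))
  have hev : ∀ᶠ θ in cocompact ℝ, f θ ≤ Real.exp T + 1 :=
    h1.eventually (eventually_le_nhds (lt_add_one _))
  rw [Filter.eventually_iff, Filter.mem_cocompact] at hev
  obtain ⟨K, hK, hKsub⟩ := hev
  have hbdd : BddAbove (f '' K) := (hK.image hcont).bddAbove
  obtain ⟨B, hB⟩ := hbdd
  refine ⟨max B (Real.exp T + 1), fun θ => ?_⟩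
  rw [SecondMomentAux.integral_eq T θ y]
  by_cases hθ : θ ∈ K
  · exact le_trans (hB (Set.mem_image_of_mem f hθ)) (le_max_left _ _)
  · exact le_trans (hKsub hθ) (le_max_right _ _)
end

section
/- Let {P_γ}_{γ∈Y} be a family of Markov kernels on (X, B(X)) and let D_ℓ = sup_x ‖P_{N_{ℓ+1}}(x, ·) − P_{N_ℓ}(x, ·)‖_TV where N_ℓ is the (random) adaptation index at iteration ℓ. Suppose the adaptation rule only changes N (i.e., N_{ℓ+1} ≠ N_ℓ) with conditional probability at most p_{⌊ℓ/K⌋} given the history, where p_j → 0 as j → ∞. Then for every ε > 0, P(D_ℓ ≥ ε) → 0 as ℓ → ∞. -/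
open MeasureTheory Filter

/-- Diminishing adaptation (Lemma 1): if the adaptation index `N` changes with conditional
probability (given the history) at most `p_{⌊ℓ/K⌋} → 0`, then
`D_ℓ = sup_x ‖P_{N_{ℓ+1}}(x,·) − P_{N_ℓ}(x,·)‖_TV` converges to `0` in probability. -/
theorem diminishing_adaptation
    {Ω X : Type*} [MeasurableSpace X] {mΩ : MeasurableSpace Ω}
    (μ : Measure Ω) [IsProbabilityMeasure μ]
    (P : ℕ → X → Measure X)
    (N : ℕ → Ω → ℕ) (hN : ∀ ℓ, Measurable (N ℓ))
    (K : ℕ) (hK : 0 < K) (pr : ℕ → ℝ) (hpr : Tendsto pr atTop (nhds 0))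
    (𝒢 : ℕ → MeasurableSpace Ω) (h𝒢 : ∀ ℓ, 𝒢 ℓ ≤ mΩ)
    (hadapt : ∀ ℓ,
      μ[Set.indicator {ω | N (ℓ + 1) ω ≠ N ℓ ω} (fun _ => (1 : ℝ)) | 𝒢 ℓ]
        ≤ᵐ[μ] fun _ => pr (ℓ / K)) :
    ∀ ε : ENNReal, 0 < ε →
      Tendsto
        (fun ℓ => μ {ω | ε ≤ ⨆ x : X, ⨆ A : Set X,
          (P (N (ℓ + 1) ω) x A - P (N ℓ ω) x A) ⊔ (P (N ℓ ω) x A - P (N (ℓ + 1) ω) x A)})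
        atTop (nhds 0) := by
  intro ε hε
  -- the event {D_ℓ ≥ ε} is contained in {N_{ℓ+1} ≠ N_ℓ}
  have hsub : ∀ ℓ, {ω | ε ≤ ⨆ x : X, ⨆ A : Set X,
      (P (N (ℓ + 1) ω) x A - P (N ℓ ω) x A) ⊔ (P (N ℓ ω) x A - P (N (ℓ + 1) ω) x A)}
      ⊆ {ω | N (ℓ + 1) ω ≠ N ℓ ω} := by
    intro ℓ ω hω
    by_contra h
    simp only [Set.mem_setOf_eq, not_not] at h
    simp only [Set.mem_setOf_eq, h] at hω
    simp only [tsub_self, sup_idem, iSup_const] at hω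
    exact absurd (le_antisymm (le_of_le_of_eq hω (by simp)) hε.le) hε.ne'
  -- the indicator is integrable
  have hmeas : ∀ ℓ, MeasurableSet {ω | N (ℓ + 1) ω ≠ N ℓ ω} := fun ℓ =>
    (measurableSet_eq_fun (hN (ℓ + 1)) (hN ℓ)).compl
  have hbound : ∀ ℓ, μ {ω | N (ℓ + 1) ω ≠ N ℓ ω} ≤ ENNReal.ofReal (pr (ℓ / K)) := by
    intro ℓ
    have hint : Integrable
        (Set.indicator {ω | N (ℓ + 1) ω ≠ N ℓ ω} (fun _ => (1 : ℝ))) μ :=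
      (integrable_const (1 : ℝ)).indicator (hmeas ℓ)
    have h1 : ∫ ω, Set.indicator {ω | N (ℓ + 1) ω ≠ N ℓ ω} (fun _ => (1 : ℝ)) ω ∂μ
        ≤ ∫ _, pr (ℓ / K) ∂μ := by
      rw [← integral_condExp (h𝒢 ℓ) (μ := μ)
        (f := Set.indicator {ω | N (ℓ + 1) ω ≠ N ℓ ω} (fun _ => (1 : ℝ)))]
      exact integral_mono_ae (integrable_condExp) (integrable_const _) (hadapt ℓ)
    have h2 : (μ {ω | N (ℓ + 1) ω ≠ N ℓ ω}).toReal ≤ pr (ℓ / K) := by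
      have := integral_indicator_one (μ := μ) (hmeas ℓ)
      simp only [Pi.one_def] at this
      rwa [this, integral_const, probReal_univ, one_smul] at h1
    calc μ {ω | N (ℓ + 1) ω ≠ N ℓ ω}
          = ENNReal.ofReal (μ {ω | N (ℓ + 1) ω ≠ N ℓ ω}).toReal :=
          (ENNReal.ofReal_toReal (measure_ne_top μ _)).symm
      _ ≤ ENNReal.ofReal (pr (ℓ / K)) := ENNReal.ofReal_le_ofReal h2
  -- squeeze
  have hto : Tendsto (fun ℓ => ENNReal.ofReal (pr (ℓ / K))) atTop (nhds 0) := by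
    have : Tendsto (fun ℓ : ℕ => pr (ℓ / K)) atTop (nhds 0) := by
      have := map_div_atTop_eq_nat K hK
      rw [show (fun ℓ : ℕ => pr (ℓ / K)) = pr ∘ (fun a => a / K) from rfl,
        ← tendsto_map'_iff, this]
      exact hpr
    simpa [Function.comp_def] using (ENNReal.continuous_ofReal.tendsto 0).comp this
  refine tendsto_of_tendsto_of_tendsto_of_le_of_le tendsto_const_nhds hto
    (fun ℓ => zero_le ..) (fun ℓ => le_trans (measure_mono (hsub ℓ)) (hbound ℓ))
end

section
/- Let P be a Markov kernel on (X, 𝒮), ν a probability measure, C ∈ 𝒮, ε > 0, b, c > 0, 0 < α ≤ 1, and V : X → [1, ∞) measurable, satisfying P(x, ·) ≥ ε 1_C(x) ν(·) and PV(x) ≤ V(x) − c V(x)^{1−α} + b 1_C(x) for all x. Then P admits an invariant probability measure π with π(V^{1−α}) < ∞. -/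
open MeasureTheory
open scoped ENNReal

private lemma measure_sub_zero' {α : Type*} [MeasurableSpace α] (μ : Measure α) :
    μ - (0 : Measure α) = μ := by
  rw [MeasureTheory.Measure.sub_def]
  refine le_antisymm (sInf_le (by simp)) (le_sInf fun d hd => by simpa using hd)

set_option maxHeartbeats 1000000

/-- Proposition A.1(i) of Atchadé–Fort: a polynomial drift condition toward a small set
yields an invariant probability measure `π` with `π(V^{1−α}) < ∞`. -/
theorem invariant_measure_of_polynomial_drift
    {X : Type*} [MeasurableSpace X]
    (P : ProbabilityTheory.Kernel X X) [ProbabilityTheory.IsMarkovKernel P]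
    (ν : Measure X) [IsProbabilityMeasure ν]
    (C : Set X) (hC : MeasurableSet C)
    (ε b c α : ℝ) (hε : 0 < ε) (hb : 0 < b) (hc : 0 < c) (hα : 0 < α) (hα1 : α ≤ 1)
    (V : X → ℝ) (hV : Measurable V) (hV1 : ∀ x, 1 ≤ V x)
    (hminor : ∀ x ∈ C, ∀ A : Set X, MeasurableSet A →
      ENNReal.ofReal ε * ν A ≤ P x A)
    (hint : ∀ x, Integrable V (P x))
    (hdrift : ∀ x, ∫ y, V y ∂(P x) ≤
      V x - c * V x ^ (1 - α) + b * Set.indicator C (fun _ => (1 : ℝ)) x) :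
    ∃ π : Measure X, IsProbabilityMeasure π ∧ π.bind P = π ∧
      ∫⁻ x, ENNReal.ofReal (V x ^ (1 - α)) ∂π < ⊤ := by
  classical
  -- abbreviations
  set e : ℝ≥0∞ := ENNReal.ofReal ε with he
  set bb : ℝ≥0∞ := ENNReal.ofReal b with hbb
  set cc : ℝ≥0∞ := ENNReal.ofReal c with hcc
  have he0 : e ≠ 0 := by simp [he, ENNReal.ofReal_eq_zero]; linarith
  have heT : e ≠ ⊤ := ENNReal.ofReal_ne_top
  have hcc0 : cc ≠ 0 := by simp [hcc, ENNReal.ofReal_eq_zero]; linarith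
  have hccT : cc ≠ ⊤ := ENNReal.ofReal_ne_top
  have hbbT : bb ≠ ⊤ := ENNReal.ofReal_ne_top
  set W : X → ℝ≥0∞ := fun x => ENNReal.ofReal (V x) with hWdef
  set U : X → ℝ≥0∞ := fun x => ENNReal.ofReal (V x ^ (1 - α)) with hUdef
  set ι : X → ℝ≥0∞ := C.indicator (fun _ => (1 : ℝ≥0∞)) with hιdef
  have hWm : Measurable W := hV.ennreal_ofReal
  have hUm : Measurable U :=
    ((Real.continuous_rpow_const (by linarith : (0:ℝ) ≤ 1 - α)).measurable.comp hV).ennreal_ofReal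
  have hιm : Measurable ι := measurable_const.indicator hC
  have hV0 : ∀ x, (0:ℝ) ≤ V x := fun x => le_trans zero_le_one (hV1 x)
  have hU1 : ∀ x, 1 ≤ U x := by
    intro x
    rw [hUdef]
    exact ENNReal.one_le_ofReal.2 (Real.one_le_rpow (hV1 x) (by linarith))
  have hWT : ∀ x, W x ≠ ⊤ := fun x => ENNReal.ofReal_ne_top
  have hPV : ∀ x, ∫⁻ y, W y ∂(P x) = ENNReal.ofReal (∫ y, V y ∂(P x)) := fun x =>
    (MeasureTheory.ofReal_integral_eq_lintegral_ofReal (hint x)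
      (Filter.Eventually.of_forall fun y => hV0 y)).symm
  have hPVT : ∀ x, ∫⁻ y, W y ∂(P x) ≠ ⊤ := by
    intro x; rw [hPV x]; exact ENNReal.ofReal_ne_top
  -- drift inequality in ℝ≥0∞
  have hdriftE : ∀ x, ∫⁻ y, W y ∂(P x) + cc * U x ≤ W x + bb * ι x := by
    intro x
    have hIp : (0:ℝ) ≤ ∫ y, V y ∂(P x) := integral_nonneg fun y => hV0 y
    have hrp : (0:ℝ) ≤ V x ^ (1 - α) := Real.rpow_nonneg (hV0 x) _
    have hd := hdrift x
    by_cases hx : x ∈ C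
    · rw [Set.indicator_of_mem hx] at hd
      simp only [hιdef, Set.indicator_of_mem hx, mul_one]
      rw [hPV x, hUdef, hcc, hbb, hWdef, ← ENNReal.ofReal_mul hc.le,
        ← ENNReal.ofReal_add hIp (by positivity), ← ENNReal.ofReal_add (hV0 x) hb.le]
      exact ENNReal.ofReal_le_ofReal (by linarith)
    · rw [Set.indicator_of_notMem hx] at hd
      simp only [hιdef, Set.indicator_of_notMem hx, mul_zero, add_zero]
      rw [hPV x, hUdef, hcc, hWdef, ← ENNReal.ofReal_mul hc.le,
        ← ENNReal.ofReal_add hIp (by positivity)]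
      exact ENNReal.ofReal_le_ofReal (by linarith)
  -- X is nonempty
  have hXne : Nonempty X := by
    by_contra h
    rw [not_nonempty_iff] at h
    have h1 : ν Set.univ = 1 := measure_univ
    rw [Set.univ_eq_empty_iff.2 h] at h1
    simp at h1
  -- Case C = ∅ : hypotheses are contradictory
  rcases Set.eq_empty_or_nonempty C with hCe | ⟨x₁, hx₁⟩
  · exfalso
    obtain ⟨x₀⟩ := hXne
    have hι0 : ∀ x, ι x = 0 := by intro x; simp [hιdef, hCe]
    -- iterate P from δ x₀
    set ρ : ℕ → Measure X := fun n => (fun m : Measure X => m.bind ⇑P)^[n] (Measure.dirac x₀)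
      with hρ
    have hρsucc : ∀ n, ρ (n + 1) = (ρ n).bind ⇑P := fun n =>
      Function.iterate_succ_apply' _ n _
    have hPm : Measurable (⇑P) := P.measurable
    have hρuniv : ∀ n, ρ n Set.univ = 1 := by
      intro n; induction n with
      | zero => simp [hρ]
      | succ n ih =>
        rw [hρsucc n, Measure.bind_apply MeasurableSet.univ hPm.aemeasurable]
        have hone : ∀ x, P x Set.univ = 1 := fun x => measure_univ
        simp only [hone, lintegral_one, ih]
    have hstep : ∀ n, (∫⁻ x, W x ∂(ρ (n+1))) + cc ≤ ∫⁻ x, W x ∂(ρ n) := by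
      intro n
      rw [hρsucc n, Measure.lintegral_bind hPm.aemeasurable hWm.aemeasurable]
      have hone : (1:ℝ≥0∞) ≤ ∫⁻ x, U x ∂(ρ n) := by
        have h0 : (1:ℝ≥0∞) = ∫⁻ _, (1:ℝ≥0∞) ∂(ρ n) := by rw [lintegral_one, hρuniv n]
        rw [h0]
        exact lintegral_mono fun x => hU1 x
      have hUc : cc ≤ ∫⁻ x, cc * U x ∂(ρ n) := by
        rw [lintegral_const_mul cc hUm]
        calc cc = cc * 1 := (mul_one cc).symm
        _ ≤ cc * ∫⁻ x, U x ∂(ρ n) := mul_le_mul_right hone cc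
      have hm1 : Measurable fun x => ∫⁻ y, W y ∂(P x) :=
        (Measure.measurable_lintegral hWm).comp hPm
      calc (∫⁻ x, ∫⁻ y, W y ∂(P x) ∂(ρ n)) + cc
          ≤ (∫⁻ x, ∫⁻ y, W y ∂(P x) ∂(ρ n)) + ∫⁻ x, cc * U x ∂(ρ n) :=
            add_le_add_right hUc _
        _ = ∫⁻ x, (∫⁻ y, W y ∂(P x)) + cc * U x ∂(ρ n) := by
            rw [lintegral_add_left hm1]
        _ ≤ ∫⁻ x, W x + bb * ι x ∂(ρ n) := lintegral_mono fun x => hdriftE x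
        _ = ∫⁻ x, W x ∂(ρ n) := by
            simp only [hι0, mul_zero, add_zero]
    have hiter : ∀ n, (∫⁻ x, W x ∂(ρ n)) + (n : ℝ≥0∞) * cc ≤ ∫⁻ x, W x ∂(ρ 0) := by
      intro n; induction n with
      | zero => simp
      | succ n ih =>
        calc (∫⁻ x, W x ∂(ρ (n+1))) + ((n+1 : ℕ) : ℝ≥0∞) * cc
            = ((∫⁻ x, W x ∂(ρ (n+1))) + cc) + (n : ℝ≥0∞) * cc := by
              push_cast; ring
          _ ≤ (∫⁻ x, W x ∂(ρ n)) + (n : ℝ≥0∞) * cc := by gcongr; exact hstep n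
          _ ≤ ∫⁻ x, W x ∂(ρ 0) := ih
    have hρ0 : ∫⁻ x, W x ∂(ρ 0) = W x₀ := by
      simp only [hρ, Function.iterate_zero, id_eq]
      exact lintegral_dirac' x₀ hWm
    have hfin : ∫⁻ x, W x ∂(ρ 0) ≠ ⊤ := by rw [hρ0]; exact hWT x₀
    have hkey : ∀ n : ℕ, (n : ℝ≥0∞) * cc ≤ ∫⁻ x, W x ∂(ρ 0) := fun n =>
      le_trans (le_add_self) (hiter n)
    have hd : ∀ n : ℕ, (n : ℝ≥0∞) ≤ (∫⁻ x, W x ∂(ρ 0)) / cc := fun n =>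
      (ENNReal.le_div_iff_mul_le (Or.inl hcc0) (Or.inl hccT)).2 (hkey n)
    have hdT : (∫⁻ x, W x ∂(ρ 0)) / cc ≠ ⊤ :=
      (ENNReal.div_lt_top hfin hcc0).ne
    obtain ⟨n, hn⟩ := ENNReal.exists_nat_gt hdT
    exact absurd (hd n) (not_le.2 hn)
  -- Main case: C nonempty.
  -- The residual kernel R x = P x - ε 1_C(x) ν
  have hεν_fin : IsFiniteMeasure (e • ν) := ν.smul_finite heT
  have hle : ∀ x ∈ C, e • ν ≤ P x := by
    intro x hx
    rw [Measure.le_iff]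
    intro s hs
    simpa [Measure.smul_apply, smul_eq_mul] using hminor x hx s hs
  set R : X → Measure X := fun x => P x - C.indicator (fun _ => e • ν) x with hRdef
  have hRadd : ∀ x, R x + C.indicator (fun _ => e • ν) x = P x := by
    intro x
    by_cases hx : x ∈ C
    · simp only [hRdef, Set.indicator_of_mem hx]
      exact Measure.sub_add_cancel_of_le (hle x hx)
    · simp only [hRdef, Set.indicator_of_notMem hx]
      rw [measure_sub_zero']
      simp
  have hRap : ∀ x, ∀ s : Set X, MeasurableSet s →
      R x s = P x s - C.indicator (fun _ => e * ν s) x := by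
    intro x s hs
    by_cases hx : x ∈ C
    · simp only [hRdef, Set.indicator_of_mem hx]
      rw [Measure.sub_apply hs (hle x hx)]
      simp [Measure.smul_apply, smul_eq_mul]
    · simp only [hRdef, Set.indicator_of_notMem hx]
      rw [measure_sub_zero']
      simp
  have hRm : Measurable R := by
    apply Measure.measurable_of_measurable_coe
    intro s hs
    have : (fun x => R x s) = fun x => P x s - C.indicator (fun _ => e * ν s) x := by
      funext x; exact hRap x s hs
    rw [this]
    exact (P.measurable_coe hs).sub (measurable_const.indicator hC)
  -- lintegral splitting for P
  have hPsplit : ∀ (f : X → ℝ≥0∞), ∀ x,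
      ∫⁻ y, f y ∂(P x) = (∫⁻ y, f y ∂(R x)) + (e * ∫⁻ y, f y ∂ν) * ι x := by
    intro f x
    conv_lhs => rw [← hRadd x]
    rw [lintegral_add_measure]
    congr 1
    by_cases hx : x ∈ C
    · simp [Set.indicator_of_mem hx, hιdef, lintegral_smul_measure]
    · simp [Set.indicator_of_notMem hx, hιdef]
  have hRle : ∀ x, R x ≤ P x := fun x => Measure.sub_le
  -- drift for R
  have hdriftR : ∀ x, (∫⁻ y, W y ∂(R x)) + cc * U x ≤ W x + bb * ι x := by
    intro x
    refine le_trans ?_ (hdriftE x)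
    gcongr
    exact hRle x
  -- mass identity for R
  have hRuniv : ∀ x, R x Set.univ + e * ι x = 1 := by
    intro x
    have h := congrArg (fun m : Measure X => m Set.univ) (hRadd x)
    simp only [Measure.add_apply] at h
    have h2 : (C.indicator (fun _ => e • ν) x) Set.univ = e * ι x := by
      by_cases hx : x ∈ C <;>
        simp [Set.indicator_of_mem, Set.indicator_of_notMem, hx, hιdef, Measure.smul_apply,
          smul_eq_mul, measure_univ]
    rw [← h2, h, measure_univ]
  -- ν W is finite, by minorization at a point of C
  have hνW : ∫⁻ x, W x ∂ν ≠ ⊤ := by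
    have h1 : e * ∫⁻ x, W x ∂ν ≤ ∫⁻ x, W x ∂(P x₁) := by
      rw [← smul_eq_mul, ← lintegral_smul_measure]
      exact lintegral_mono' (hle x₁ hx₁) le_rfl
    intro h
    rw [h, ENNReal.mul_top he0] at h1
    exact hPVT x₁ (top_le_iff.1 h1)
  -- the sequence of measures
  set μs : ℕ → Measure X := fun n => (fun m : Measure X => m.bind R)^[n] ν with hμs
  have hμ0 : μs 0 = ν := rfl
  have hμsucc : ∀ n, μs (n + 1) = (μs n).bind R := fun n =>
    Function.iterate_succ_apply' _ n _
  set a : ℕ → ℝ≥0∞ := fun n => μs n Set.univ with ha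
  set s : ℕ → ℝ≥0∞ := fun n => μs n C with hs
  set v : ℕ → ℝ≥0∞ := fun n => ∫⁻ x, W x ∂(μs n) with hv
  set w : ℕ → ℝ≥0∞ := fun n => ∫⁻ x, U x ∂(μs n) with hw
  have hRcm : ∀ s : Set X, MeasurableSet s → Measurable (fun x => R x s) := fun s hs =>
    (Measure.measurable_coe hs).comp hRm
  have hιint : ∀ n, ∫⁻ x, ι x ∂(μs n) = s n := by
    intro n
    rw [hιdef]
    rw [lintegral_indicator_const hC]
    simp [hs]
  -- mass recursion
  have hmass : ∀ n, a (n + 1) + e * s n = a n := by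
    intro n
    have h1 : a (n + 1) = ∫⁻ x, R x Set.univ ∂(μs n) := by
      simp only [ha]
      rw [hμsucc n, Measure.bind_apply MeasurableSet.univ hRm.aemeasurable]
    have h2 : e * s n = ∫⁻ x, e * ι x ∂(μs n) := by
      rw [lintegral_const_mul e hιm, hιint n]
    rw [h1, h2, ← lintegral_add_left (hRcm _ MeasurableSet.univ)]
    simp only [hRuniv]
    simp [ha, lintegral_one]
  have hamono : ∀ n, a (n + 1) ≤ a n := fun n => le_trans le_self_add (hmass n).le
  have ha0 : a 0 = 1 := by simp [ha, hμ0, measure_univ]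
  have haT : ∀ n, a n ≤ 1 := by
    intro n; induction n with
    | zero => rw [ha0]
    | succ n ih => exact le_trans (hamono n) ih
  have hsa : ∀ n, s n ≤ a n := fun n => measure_mono (Set.subset_univ C)
  -- drift recursion
  have hvrec : ∀ n, v (n + 1) + cc * w n ≤ v n + bb * s n := by
    intro n
    have h1 : v (n + 1) = ∫⁻ x, ∫⁻ y, W y ∂(R x) ∂(μs n) := by
      simp only [hv]
      rw [hμsucc n, Measure.lintegral_bind hRm.aemeasurable hWm.aemeasurable]
    have hRWm : Measurable fun x => ∫⁻ y, W y ∂(R x) :=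
      (Measure.measurable_lintegral hWm).comp hRm
    calc v (n + 1) + cc * w n
        = (∫⁻ x, ∫⁻ y, W y ∂(R x) ∂(μs n)) + ∫⁻ x, cc * U x ∂(μs n) := by
          rw [h1, lintegral_const_mul cc hUm]
      _ = ∫⁻ x, (∫⁻ y, W y ∂(R x)) + cc * U x ∂(μs n) := by
          rw [lintegral_add_left hRWm]
      _ ≤ ∫⁻ x, W x + bb * ι x ∂(μs n) := lintegral_mono fun x => hdriftR x
      _ = v n + bb * s n := by
          rw [lintegral_add_left hWm, lintegral_const_mul bb hιm, hιint n]
  -- telescoping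
  have htel : ∀ n, a n + e * ∑ k ∈ Finset.range n, s k = 1 := by
    intro n; induction n with
    | zero => simpa using ha0
    | succ n ih =>
      rw [Finset.sum_range_succ, mul_add]
      calc a (n+1) + (e * ∑ k ∈ Finset.range n, s k + e * s n)
          = (a (n+1) + e * s n) + e * ∑ k ∈ Finset.range n, s k := by ring
        _ = a n + e * ∑ k ∈ Finset.range n, s k := by rw [hmass n]
        _ = 1 := ih
  have hes_le : ∀ n, e * ∑ k ∈ Finset.range n, s k ≤ 1 := fun n =>
    le_trans le_add_self (htel n).le
  have hssum_le : ∑' k, s k ≤ e⁻¹ := by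
    rw [ENNReal.tsum_eq_iSup_nat]
    exact iSup_le fun n => ENNReal.le_inv_iff_mul_le.2 (by rw [mul_comm]; exact hes_le n)
  have hvtel : ∀ n, v n + cc * ∑ k ∈ Finset.range n, w k
      ≤ v 0 + bb * ∑ k ∈ Finset.range n, s k := by
    intro n; induction n with
    | zero => simp
    | succ n ih =>
      calc v (n + 1) + cc * ∑ k ∈ Finset.range (n+1), w k
          = (v (n + 1) + cc * w n) + cc * ∑ k ∈ Finset.range n, w k := by
            rw [Finset.sum_range_succ, mul_add]; ring
        _ ≤ (v n + bb * s n) + cc * ∑ k ∈ Finset.range n, w k :=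
            add_le_add (hvrec n) le_rfl
        _ = (v n + cc * ∑ k ∈ Finset.range n, w k) + bb * s n := by ring
        _ ≤ (v 0 + bb * ∑ k ∈ Finset.range n, s k) + bb * s n := by gcongr
        _ = v 0 + bb * ∑ k ∈ Finset.range (n+1), s k := by
            rw [Finset.sum_range_succ, mul_add]; ring
  have hv0 : v 0 ≠ ⊤ := by simpa [hv, hμ0] using hνW
  set K : ℝ≥0∞ := v 0 + bb * e⁻¹ with hK
  have hKT : K ≠ ⊤ :=
    ENNReal.add_ne_top.2 ⟨hv0, ENNReal.mul_ne_top hbbT (ENNReal.inv_ne_top.2 he0)⟩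
  have hwpart : ∀ n, cc * ∑ k ∈ Finset.range n, w k ≤ K := by
    intro n
    calc cc * ∑ k ∈ Finset.range n, w k ≤ v n + cc * ∑ k ∈ Finset.range n, w k :=
          le_add_self
      _ ≤ v 0 + bb * ∑ k ∈ Finset.range n, s k := hvtel n
      _ ≤ v 0 + bb * e⁻¹ := by
          gcongr
          calc (∑ k ∈ Finset.range n, s k) ≤ ∑' k, s k := ENNReal.sum_le_tsum _
            _ ≤ e⁻¹ := hssum_le
  have hwsum : ∑' k, w k ≠ ⊤ := by
    have : ∑' k, w k ≤ K / cc := by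
      rw [ENNReal.tsum_eq_iSup_nat]
      exact iSup_le fun n => (ENNReal.le_div_iff_mul_le (Or.inl hcc0) (Or.inl hccT)).2
        (by rw [mul_comm]; exact hwpart n)
    exact ne_top_of_le_ne_top (ENNReal.div_lt_top hKT hcc0).ne this
  have haw : ∀ n, a n ≤ w n := by
    intro n
    rw [ha, hw]
    calc μs n Set.univ = ∫⁻ _, (1:ℝ≥0∞) ∂(μs n) := by rw [lintegral_one]
      _ ≤ ∫⁻ x, U x ∂(μs n) := lintegral_mono fun x => hU1 x
  have hasum : ∑' n, a n ≠ ⊤ :=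
    ne_top_of_le_ne_top hwsum (ENNReal.tsum_le_tsum haw)
  -- infimum of a is 0
  have hainf : ⨅ n, a n = 0 := by
    by_contra h
    have hpos : (⨅ n, a n) ≠ 0 := h
    have : ∀ n, (⨅ m, a m) ≤ a n := fun n => iInf_le _ n
    have h2 : (∑' _ : ℕ, ⨅ m, a m) ≤ ∑' n, a n := ENNReal.tsum_le_tsum this
    rw [ENNReal.tsum_const_eq_top_of_ne_zero hpos] at h2
    exact hasum (top_le_iff.1 h2)
  -- ε times total mass on C equals 1
  have hes : e * ∑' n, s n = 1 := by
    rw [ENNReal.tsum_eq_iSup_nat, ENNReal.mul_iSup]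
    have h1 : ∀ n, e * ∑ k ∈ Finset.range n, s k = 1 - a n := by
      intro n
      have := htel n
      exact ENNReal.eq_sub_of_add_eq (ne_top_of_le_ne_top ENNReal.one_ne_top (haT n))
        (by rw [add_comm]; exact this)
    calc (⨆ n, e * ∑ k ∈ Finset.range n, s k) = ⨆ n, 1 - a n := by
          exact iSup_congr h1
      _ = 1 - ⨅ n, a n := (ENNReal.sub_iInf).symm
      _ = 1 := by rw [hainf, tsub_zero]
  -- the invariant measure
  set μ : Measure X := Measure.sum μs with hμ
  have hμuniv : μ Set.univ = ∑' n, a n := by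
    rw [hμ, Measure.sum_apply _ MeasurableSet.univ]
  have hμfin : μ Set.univ ≠ ⊤ := by rw [hμuniv]; exact hasum
  have hμ1 : 1 ≤ μ Set.univ := by
    rw [hμuniv, ← ha0]
    exact ENNReal.le_tsum 0
  have hμ0' : μ Set.univ ≠ 0 := fun h => by simp [h] at hμ1
  have hμU : ∫⁻ x, U x ∂μ = ∑' n, w n := by
    rw [hμ, lintegral_sum_measure]
  have hPam : AEMeasurable (⇑P) μ := P.measurable.aemeasurable
  -- invariance of μ
  have hinv : μ.bind ⇑P = μ := by
    ext A hA
    rw [Measure.bind_apply hA P.measurable.aemeasurable, hμ, lintegral_sum_measure]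
    have hsplit : ∀ n, ∫⁻ x, P x A ∂(μs n) = μs (n + 1) A + (e * ν A) * s n := by
      intro n
      have hpt : ∀ x, P x A = R x A + (e * ν A) * ι x := by
        intro x
        have h := congrArg (fun m : Measure X => m A) (hRadd x)
        simp only [Measure.add_apply] at h
        have h2 : (C.indicator (fun _ => e • ν) x) A = (e * ν A) * ι x := by
          by_cases hx : x ∈ C <;>
            simp [Set.indicator_of_mem, Set.indicator_of_notMem, hx, hιdef, Measure.smul_apply,
              smul_eq_mul, mul_comm]
        rw [← h2, h]
      calc ∫⁻ x, P x A ∂(μs n) = ∫⁻ x, R x A + (e * ν A) * ι x ∂(μs n) := by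
            exact lintegral_congr hpt
        _ = (∫⁻ x, R x A ∂(μs n)) + ∫⁻ x, (e * ν A) * ι x ∂(μs n) :=
            lintegral_add_left (hRcm A hA) _
        _ = μs (n + 1) A + (e * ν A) * s n := by
            rw [lintegral_const_mul _ hιm, hιint n,
              ← Measure.bind_apply hA hRm.aemeasurable, ← hμsucc n]
    calc ∑' n, ∫⁻ x, P x A ∂(μs n)
        = ∑' n, (μs (n + 1) A + (e * ν A) * s n) := tsum_congr hsplit
      _ = (∑' n, μs (n + 1) A) + ∑' n, (e * ν A) * s n := ENNReal.tsum_add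
      _ = (∑' n, μs (n + 1) A) + ν A := by
          rw [ENNReal.tsum_mul_left]
          congr 1
          rw [mul_comm e (ν A), mul_assoc, hes, mul_one]
      _ = (∑' n, μs (n + 1) A) + μs 0 A := by rw [hμ0]
      _ = ∑' n, μs n A := by
          rw [add_comm]
          exact (tsum_eq_zero_add' (f := fun n => μs n A) ENNReal.summable).symm
      _ = Measure.sum μs A := (Measure.sum_apply _ hA).symm
  -- normalize
  refine ⟨(μ Set.univ)⁻¹ • μ, ?_, ?_, ?_⟩
  · constructor
    rw [Measure.smul_apply, smul_eq_mul]
    exact ENNReal.inv_mul_cancel hμ0' hμfin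
  · ext A hA
    rw [Measure.bind_apply hA P.measurable.aemeasurable,
      lintegral_smul_measure, Measure.smul_apply, smul_eq_mul]
    congr 1
    rw [← Measure.bind_apply hA P.measurable.aemeasurable, hinv]
  · rw [lintegral_smul_measure]
    show (μ Set.univ)⁻¹ * ∫⁻ x, U x ∂μ < ⊤
    rw [hμU]
    exact ENNReal.mul_lt_top (ENNReal.inv_lt_top.2 (by
      exact lt_of_lt_of_le zero_lt_one hμ1)) (lt_top_iff_ne_top.2 hwsum)
end

section
/- Let π(θ) ∝ ((θ²+1)/(θ²+2))^{T/2} exp(−(1/2)(((θ²+1)/(θ²+2)) ∑_{t=1}^T (θ−y_t)² + θ²/σ₀²)) on ℝ. Then limsup_{|θ|→∞} (θ/|θ|) · (π'(θ)/|π'(θ)|) < 0; indeed this limit equals −1. -/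
open Filter

noncomputable def RCauxP (T : ℕ) (y : Fin T → ℝ) (σ₀ Z θ : ℝ) : ℝ :=
  Z * Real.exp (-(1 / 2) * (((θ ^ 2 + 1) / (θ ^ 2 + 2)) * ∑ t : Fin T, (θ - y t) ^ 2
        + θ ^ 2 / σ₀ ^ 2)) * ((θ ^ 2 + 1) / (θ ^ 2 + 2)) ^ ((T : ℝ) / 2 - 1)

noncomputable def RCauxE (T : ℕ) (y : Fin T → ℝ) (σ₀ θ : ℝ) : ℝ :=
  (2 * θ / (θ ^ 2 + 2) ^ 2) * ((T : ℝ) / 2)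
  + ((θ ^ 2 + 1) / (θ ^ 2 + 2)) * (-(1 / 2) * ((2 * θ / (θ ^ 2 + 2) ^ 2) * (∑ t : Fin T, (θ - y t) ^ 2)
      + ((θ ^ 2 + 1) / (θ ^ 2 + 2)) * (∑ t : Fin T, 2 * (θ - y t)) + 2 * θ / σ₀ ^ 2))

lemma RCaux_hasDeriv (T : ℕ) (y : Fin T → ℝ) (σ₀ : ℝ) (hσ₀ : 0 < σ₀) (Z : ℝ) (p : ℝ → ℝ)
    (hp : ∀ θ : ℝ, p θ = Z * (((θ ^ 2 + 1) / (θ ^ 2 + 2)) ^ ((T : ℝ) / 2) *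
      Real.exp (-(1 / 2) * (((θ ^ 2 + 1) / (θ ^ 2 + 2)) * ∑ t : Fin T, (θ - y t) ^ 2
        + θ ^ 2 / σ₀ ^ 2)))) (θ : ℝ) :
    HasDerivAt p (RCauxP T y σ₀ Z θ * RCauxE T y σ₀ θ) θ := by
  have hden : (θ ^ 2 + 2 : ℝ) ≠ 0 := by positivity
  have hupos : (0:ℝ) < (θ ^ 2 + 1) / (θ ^ 2 + 2) := by positivity
  have h1 : HasDerivAt (fun θ : ℝ => θ ^ 2 + 1) (2 * θ) θ := by
    simpa using (hasDerivAt_pow 2 θ).add_const 1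
  have h2 : HasDerivAt (fun θ : ℝ => θ ^ 2 + 2) (2 * θ) θ := by
    simpa using (hasDerivAt_pow 2 θ).add_const 2
  have hu : HasDerivAt (fun θ : ℝ => (θ ^ 2 + 1) / (θ ^ 2 + 2)) (2 * θ / (θ ^ 2 + 2) ^ 2) θ := by
    have : HasDerivAt (fun θ : ℝ => (θ ^ 2 + 1) / (θ ^ 2 + 2)) ((2 * θ * (θ ^ 2 + 2) - (θ ^ 2 + 1) * (2 * θ)) / (θ ^ 2 + 2) ^ 2) θ := h1.div h2 hden
    convert this using 1
    ring
  have hS : HasDerivAt (fun θ : ℝ => ∑ t : Fin T, (θ - y t) ^ 2) (∑ t : Fin T, 2 * (θ - y t)) θ := by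
    apply HasDerivAt.fun_sum
    intro t _
    simpa [mul_comm] using ((hasDerivAt_id θ).sub_const (y t)).fun_pow 2
  have hq : HasDerivAt (fun θ : ℝ => θ ^ 2 / σ₀ ^ 2) (2 * θ / σ₀ ^ 2) θ := by
    simpa using (hasDerivAt_pow 2 θ).div_const (σ₀ ^ 2)
  have hA : HasDerivAt (fun θ : ℝ => ((θ ^ 2 + 1) / (θ ^ 2 + 2)) * (∑ t : Fin T, (θ - y t) ^ 2) + θ ^ 2 / σ₀ ^ 2)
      ((2 * θ / (θ ^ 2 + 2) ^ 2) * (∑ t : Fin T, (θ - y t) ^ 2)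
        + ((θ ^ 2 + 1) / (θ ^ 2 + 2)) * (∑ t : Fin T, 2 * (θ - y t)) + 2 * θ / σ₀ ^ 2) θ :=
    (hu.mul hS).add hq
  have hexp := (hA.const_mul (-(1 / 2) : ℝ)).exp
  have hrpow := hu.rpow_const (p := (T : ℝ) / 2) (Or.inl (ne_of_gt hupos))
  have hmul := (hrpow.mul hexp).const_mul Z
  have hfun : (fun θ : ℝ => Z * ((fun θ : ℝ => ((θ ^ 2 + 1) / (θ ^ 2 + 2)) ^ ((T : ℝ) / 2)) θ *
      (fun θ : ℝ => Real.exp (-(1 / 2) * (((θ ^ 2 + 1) / (θ ^ 2 + 2)) * ∑ t : Fin T, (θ - y t) ^ 2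
        + θ ^ 2 / σ₀ ^ 2))) θ)) = p := by
    funext x
    rw [hp x]
  have hsplit : ((θ ^ 2 + 1) / (θ ^ 2 + 2) : ℝ) ^ ((T : ℝ) / 2)
      = ((θ ^ 2 + 1) / (θ ^ 2 + 2)) ^ ((T : ℝ) / 2 - 1) * ((θ ^ 2 + 1) / (θ ^ 2 + 2)) := by
    have h := Real.rpow_add_one (ne_of_gt hupos) ((T : ℝ) / 2 - 1)
    rw [sub_add_cancel] at h
    simpa using h
  rw [← hfun]
  refine hmul.congr_deriv ?_
  unfold RCauxP RCauxE
  rw [hsplit]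
  ring

lemma RCaux_sign (T : ℕ) (hT : 1 ≤ T) (y : Fin T → ℝ) (σ₀ : ℝ) (hσ₀ : 0 < σ₀) (θ : ℝ)
    (hθ : 1 + |∑ t : Fin T, y t| + 2 * T * σ₀ ^ 2 ≤ |θ|) :
    θ * RCauxE T y σ₀ θ < 0 := by
  obtain ⟨s, hs_def⟩ : ∃ s : ℝ, (∑ t : Fin T, y t) = s := ⟨_, rfl⟩
  obtain ⟨S, hS_def⟩ : ∃ S : ℝ, (∑ t : Fin T, (θ - y t) ^ 2) = S := ⟨_, rfl⟩
  rw [hs_def] at hθ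
  have hsum : (∑ t : Fin T, 2 * (θ - y t)) = 2 * ((T : ℝ) * θ - s) := by
    rw [← hs_def]
    simp [mul_sub, Finset.sum_sub_distrib, Finset.sum_const, Finset.card_univ, Finset.mul_sum]
    ring
  have hSnn : 0 ≤ S := by rw [← hS_def]; positivity
  have hT1 : (1:ℝ) ≤ (T:ℝ) := by exact_mod_cast hT
  have h2σ : (0:ℝ) ≤ 2 * (T:ℝ) * σ₀ ^ 2 := by positivity
  have habs1 : 1 ≤ |θ| := by nlinarith [abs_nonneg s]
  have hdpos : (0:ℝ) < θ ^ 2 + 2 := by positivity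
  have key : θ * RCauxE T y σ₀ θ
      = (T:ℝ) * θ ^ 2 / (θ ^ 2 + 2) ^ 2
        - ((θ ^ 2 + 1) / (θ ^ 2 + 2)) * θ ^ 2 * S / (θ ^ 2 + 2) ^ 2
        - ((θ ^ 2 + 1) / (θ ^ 2 + 2)) ^ 2 * ((T:ℝ) * θ ^ 2 - s * θ)
        - ((θ ^ 2 + 1) / (θ ^ 2 + 2)) * θ ^ 2 / σ₀ ^ 2 := by
    unfold RCauxE
    rw [hsum, hS_def]
    field_simp
    ring
  obtain ⟨u, hu_def⟩ : ∃ u : ℝ, (θ ^ 2 + 1) / (θ ^ 2 + 2) = u := ⟨_, rfl⟩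
  rw [hu_def] at key
  have hupos : 0 < u := by rw [← hu_def]; positivity
  have huhalf : 1 / 2 ≤ u := by
    rw [← hu_def, le_div_iff₀ hdpos]; nlinarith [sq_nonneg θ]
  have b1 : (T:ℝ) * θ ^ 2 / (θ ^ 2 + 2) ^ 2 ≤ (T:ℝ) := by
    rw [div_le_iff₀ (by positivity)]
    nlinarith [sq_nonneg θ, sq_nonneg (θ ^ 2)]
  have b2 : 0 ≤ u * θ ^ 2 * S / (θ ^ 2 + 2) ^ 2 :=
    div_nonneg (mul_nonneg (mul_nonneg hupos.le (sq_nonneg θ)) hSnn) (by positivity)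
  have hsθ : s * θ ≤ θ ^ 2 := by
    have h1 : |s| ≤ |θ| := by nlinarith
    have h2 : s * θ ≤ |s| * |θ| := by
      calc s * θ ≤ |s * θ| := le_abs_self _
        _ = |s| * |θ| := abs_mul s θ
    have h3 : |s| * |θ| ≤ |θ| * |θ| := mul_le_mul_of_nonneg_right h1 (abs_nonneg θ)
    have h4 : |θ| * |θ| = θ ^ 2 := by rw [abs_mul_abs_self, sq]
    linarith
  have b3 : 0 ≤ u ^ 2 * ((T:ℝ) * θ ^ 2 - s * θ) := by
    apply mul_nonneg (sq_nonneg u)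
    have := mul_le_mul_of_nonneg_right hT1 (sq_nonneg θ)
    linarith
  have b4 : θ ^ 2 / (2 * σ₀ ^ 2) ≤ u * θ ^ 2 / σ₀ ^ 2 := by
    rw [div_le_div_iff₀ (by positivity) (by positivity)]
    have h7 : (0:ℝ) ≤ (u - 1 / 2) * θ ^ 2 * σ₀ ^ 2 :=
      mul_nonneg (mul_nonneg (by linarith) (sq_nonneg θ)) (sq_nonneg σ₀)
    linarith
  have b5 : (T:ℝ) < θ ^ 2 / (2 * σ₀ ^ 2) := by
    rw [lt_div_iff₀ (by positivity)]
    have h5 : 1 * |θ| ≤ |θ| * |θ| := mul_le_mul_of_nonneg_right habs1 (abs_nonneg θ)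
    have h6 : |θ| * |θ| = θ ^ 2 := by rw [abs_mul_abs_self, sq]
    linarith [abs_nonneg s]
  linarith [key]

/-- Regular contours for the synthetic-example posterior: the normalized gradient satisfies
`(θ/|θ|)·(π'(θ)/|π'(θ)|) → −1` as `|θ| → ∞`; in particular the limsup is negative. -/
theorem regular_contours_synthetic (T : ℕ) (hT : 1 ≤ T) (y : Fin T → ℝ) (σ₀ : ℝ)
    (hσ₀ : 0 < σ₀) (Z : ℝ) (hZ : 0 < Z) (p : ℝ → ℝ)
    (hp : ∀ θ : ℝ, p θ = Z * (((θ ^ 2 + 1) / (θ ^ 2 + 2)) ^ ((T : ℝ) / 2) *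
      Real.exp (-(1 / 2) * (((θ ^ 2 + 1) / (θ ^ 2 + 2)) * ∑ t : Fin T, (θ - y t) ^ 2
        + θ ^ 2 / σ₀ ^ 2)))) :
    Tendsto (fun θ : ℝ => (θ / |θ|) * (deriv p θ / |deriv p θ|))
      (Filter.cocompact ℝ) (nhds (-1)) := by
  have hcc : ∀ᶠ θ : ℝ in cocompact ℝ,
      1 + |∑ t : Fin T, y t| + 2 * T * σ₀ ^ 2 ≤ |θ| := by
    rw [cocompact_eq_atBot_atTop, eventually_sup]
    constructor
    · filter_upwards [eventually_le_atBot (-(1 + |∑ t : Fin T, y t| + 2 * T * σ₀ ^ 2))] with θ h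
      have := neg_le_abs θ
      linarith
    · filter_upwards [eventually_ge_atTop (1 + |∑ t : Fin T, y t| + 2 * T * σ₀ ^ 2)] with θ h
      exact h.trans (le_abs_self θ)
  have heq : (fun _ : ℝ => (-1 : ℝ)) =ᶠ[cocompact ℝ]
      fun θ : ℝ => (θ / |θ|) * (deriv p θ / |deriv p θ|) := by
    filter_upwards [hcc] with θ hθ
    have hd : deriv p θ = RCauxP T y σ₀ Z θ * RCauxE T y σ₀ θ :=
      (RCaux_hasDeriv T y σ₀ hσ₀ Z p hp θ).deriv
    have hP : 0 < RCauxP T y σ₀ Z θ := by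
      unfold RCauxP
      positivity
    have hE := RCaux_sign T hT y σ₀ hσ₀ θ hθ
    have hneg : θ * deriv p θ < 0 := by
      have : θ * deriv p θ = RCauxP T y σ₀ Z θ * (θ * RCauxE T y σ₀ θ) := by rw [hd]; ring
      rw [this]
      exact mul_neg_of_pos_of_neg hP hE
    have hprod : θ / |θ| * (deriv p θ / |deriv p θ|) = -1 := by
      rw [div_mul_div_comm, ← abs_mul, abs_of_neg hneg, div_neg, div_self hneg.ne]
    exact hprod.symm
  exact tendsto_const_nhds.congr' heq
end
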